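/- arXiv:2110.08695 — 2 statements merged into one kernel-verified Lean document; each statement's English description precedes it below -/
import Mathlib

section
/- For any policy π and any h ∈ [H], the variance of the remaining return decomposes as a sum of per-step total variances: Var_π[Σ_{t=h}^H r_t] = Σ_{t=h}^H ( E_π[Var[r_t + V^π_{t+1}(s_{t+1}) | s_t, a_t]] + E_π[Var[E[r_t + V^π_{t+1}(s_{t+1}) | s_t, a_t] | s_t]] ), where s_t, a_t, r_t, s_{t+1} is the random trajectory generated by π. -/
open MeasureTheory Finset
open scoped BigOperators ENNReal Classical

noncomputable section

/-- A finite-horizon (time-inhomogeneous) Markov Decision Process with finite state space `S`,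
finite action space `A`, horizon `H`, transition kernels `P h s a : S → ℝ`, random rewards with
distribution `R h s a : PMF ℝ` supported in `[0,1]`, and initial distribution `d1`.
Time steps are indexed `h ∈ {1, …, H}`. -/
structure FinMDP (S A : Type) [Fintype S] [Fintype A] where
  H : ℕ
  P : ℕ → S → A → S → ℝ
  R : ℕ → S → A → PMF ℝ
  d1 : S → ℝ
  P_nonneg : ∀ h s a s', 0 ≤ P h s a s'
  P_sum : ∀ h s a, ∑ s', P h s a s' = 1
  R_mem : ∀ h s a, ∀ x ∈ (R h s a).support, x ∈ Set.Icc (0 : ℝ) 1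
  d1_nonneg : ∀ s, 0 ≤ d1 s
  d1_sum : ∑ s, d1 s = 1

/-- A (Markovian, time-dependent) policy. -/
structure Policy (S A : Type) [Fintype A] where
  p : ℕ → S → A → ℝ
  nonneg : ∀ h s a, 0 ≤ p h s a
  sum_one : ∀ h s, ∑ a, p h s a = 1

/-- Mean of a real-valued PMF. -/
def pmfMean (q : PMF ℝ) : ℝ := ∑' x, (q x).toReal * x

/-- Variance of a real-valued PMF. -/
def pmfVarR (q : PMF ℝ) : ℝ := ∑' x, (q x).toReal * (x - pmfMean q) ^ 2

/-- Expectation of `f` under a PMF. -/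
def pmfExp {τ : Type} (q : PMF τ) (f : τ → ℝ) : ℝ := ∑' t, (q t).toReal * f t

/-- Variance of `f` under a PMF. -/
def pmfVar {τ : Type} (q : PMF τ) (f : τ → ℝ) : ℝ := pmfExp q fun t => (f t - pmfExp q f) ^ 2

/-- Squared Hellinger distance between two PMFs. -/
def hellSq {τ : Type} (q q' : PMF τ) : ℝ := 1 - ∑' t, Real.sqrt ((q t).toReal * (q' t).toReal)

/-- Probability of an event under a PMF. -/
def prEvent {τ : Type} (q : PMF τ) (E : Set τ) : ℝ≥0∞ := q.toOuterMeasure E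

/-- Variance of `f` under a finitely supported distribution given by a weight function `p`. -/
def varDist {τ : Type} [Fintype τ] (p f : τ → ℝ) : ℝ :=
  ∑ t, p t * (f t - ∑ t', p t' * f t') ^ 2

/-- Squared Hellinger distance between two finitely supported distributions. -/
def hellFin {τ : Type} [Fintype τ] (p q : τ → ℝ) : ℝ := 1 - ∑ t, Real.sqrt (p t * q t)

variable {S A : Type} [Fintype S] [Fintype A]

/-- Mean reward at `(h, s, a)`. -/
def meanR (M : FinMDP S A) (h : ℕ) (s : S) (a : A) : ℝ := pmfMean (M.R h s a)

/-- Reward variance at `(h, s, a)`. -/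
def varR (M : FinMDP S A) (h : ℕ) (s : S) (a : A) : ℝ := pmfVarR (M.R h s a)

/-- `Var_{P_h(·|s,a)}(r_h + V)`: variance of the (conditionally independent) random reward plus
next-state value `V` given `(s,a)` at step `h`. -/
def varTot (M : FinMDP S A) (h : ℕ) (s : S) (a : A) (V : S → ℝ) : ℝ :=
  varR M h s a + varDist (M.P h s a) V

/-- Value function `V^π_h`, with `V^π_{H+1} = 0`. -/
def Vpi (M : FinMDP S A) (π : Policy S A) (h : ℕ) : S → ℝ :=
  if hh : M.H + 1 ≤ h then fun _ => 0
  else fun s => ∑ a, π.p h s a * (meanR M h s a + ∑ s', M.P h s a s' * Vpi M π (h + 1) s')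
termination_by M.H + 1 - h
decreasing_by omega

/-- Q-value function `Q^π_h`. -/
def Qpi (M : FinMDP S A) (π : Policy S A) (h : ℕ) (s : S) (a : A) : ℝ :=
  meanR M h s a + ∑ s', M.P h s a s' * Vpi M π (h + 1) s'

/-- Performance `v^π = E_{s₁ ∼ d₁}[V^π_1(s₁)]`. -/
def vOf (M : FinMDP S A) (π : Policy S A) : ℝ := ∑ s, M.d1 s * Vpi M π 1 s

/-- `π` is an optimal policy: it dominates every policy at every step and state. -/
def IsOptimal (M : FinMDP S A) (π : Policy S A) : Prop :=
  ∀ (π' : Policy S A) (h : ℕ) (s : S), Vpi M π' h s ≤ Vpi M π h s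

/-- Optimal value `v⋆`. -/
def vstar (M : FinMDP S A) : ℝ := ⨆ π : Policy S A, vOf M π

/-- Marginal state distribution `d^π_h(s)` (1-indexed; `dState 1 = d₁`). -/
def dState (M : FinMDP S A) (π : Policy S A) : ℕ → S → ℝ
  | 0 => fun _ => 0
  | 1 => M.d1
  | h + 2 => fun s' => ∑ s, ∑ a, dState M π (h + 1) s * π.p (h + 1) s a * M.P (h + 1) s a s'

/-- Marginal state-action occupancy `d^π_h(s,a)`. -/
def dOcc (M : FinMDP S A) (π : Policy S A) (h : ℕ) (s : S) (a : A) : ℝ :=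
  dState M π h s * π.p h s a

/-- Marginal state distribution at time `t` of the process started at state `s0` at time `h0`. -/
def dStateFrom [DecidableEq S] (M : FinMDP S A) (π : Policy S A) (h0 : ℕ) (s0 : S) (t : ℕ) :
    S → ℝ :=
  if ht : t ≤ h0 then fun s => if s = s0 then 1 else 0
  else fun s' => ∑ s, ∑ a, dStateFrom M π h0 s0 (t - 1) s * π.p (t - 1) s a * M.P (t - 1) s a s'
termination_by t
decreasing_by omega

/-- `d̄_m`: minimal positive marginal state-action probability of the behavior policy. -/
def dbar (M : FinMDP S A) (μ : Policy S A) : ℝ :=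
  sInf {x : ℝ | ∃ h ∈ Finset.Icc 1 M.H, ∃ s a, 0 < dOcc M μ h s a ∧ x = dOcc M μ h s a}

/-- `(s,a)` is reachable at step `h` by some policy. -/
def Reachable (M : FinMDP S A) (h : ℕ) (s : S) (a : A) : Prop :=
  ∃ π : Policy S A, 0 < dOcc M π h s a

/-- `d_m`: minimal behavior probability over all reachable state-action pairs. -/
def dmin (M : FinMDP S A) (μ : Policy S A) : ℝ :=
  sInf {x : ℝ | ∃ h ∈ Finset.Icc 1 M.H, ∃ s a, Reachable M h s a ∧ x = dOcc M μ h s a}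

/-- The class `𝒢`: there is an optimal policy covered by the behavior policy `μ`. -/
def inG (μ : Policy S A) (M : FinMDP S A) : Prop :=
  ∃ π : Policy S A, IsOptimal M π ∧ ∀ h s a, 0 < dOcc M π h s a → 0 < dOcc M μ h s a

/-- `ι = log(H·S·A/δ)`. -/
def iotaLog (H nS nA : ℕ) (δ : ℝ) : ℝ := Real.log (H * nS * nA / δ)

/-- A trajectory (episode): list of `(state, action, reward)` steps plus a final state. -/
structure Traj (S A : Type) where
  steps : List (S × A × ℝ)
  final : S

/-- PMF attached to a finitely supported real distribution. -/
def finPMF {τ : Type} [Fintype τ] (p : τ → ℝ) (h0 : ∀ t, 0 ≤ p t) (h1 : ∑ t, p t = 1) : PMF τ :=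
  PMF.ofFintype (fun t => ENNReal.ofReal (p t))
    (by rw [← ENNReal.ofReal_sum_of_nonneg (fun t _ => h0 t), h1, ENNReal.ofReal_one])

def actPMF (M : FinMDP S A) (π : Policy S A) (h : ℕ) (s : S) : PMF A :=
  finPMF (π.p h s) (π.nonneg h s) (π.sum_one h s)

def transPMF (M : FinMDP S A) (h : ℕ) (s : S) (a : A) : PMF S :=
  finPMF (M.P h s a) (M.P_nonneg h s a) (M.P_sum h s a)

def initPMF (M : FinMDP S A) : PMF S := finPMF M.d1 M.d1_nonneg M.d1_sum

/-- Law of the trajectory generated by `π` starting at state `s` at time `h`, for `k` steps. -/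
def trajFrom (M : FinMDP S A) (π : Policy S A) : ℕ → ℕ → S → PMF (Traj S A)
  | _, 0, s => PMF.pure ⟨[], s⟩
  | h, k + 1, s =>
      (actPMF M π h s).bind fun a =>
        (M.R h s a).bind fun r =>
          (transPMF M h s a).bind fun s' =>
            (trajFrom M π (h + 1) k s').map fun T => ⟨(s, a, r) :: T.steps, T.final⟩

/-- Law of a full episode generated by the behavior policy `μ`. -/
def episodePMF (M : FinMDP S A) (μ : Policy S A) : PMF (Traj S A) :=
  (initPMF M).bind fun s => trajFrom M μ 1 M.H s

/-- Law of `n` i.i.d. draws from `q` (a dataset). -/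
def iidPMF {τ : Type} (q : PMF τ) : ℕ → PMF (List τ)
  | 0 => PMF.pure []
  | n + 1 => q.bind fun x => (iidPMF q n).map fun l => x :: l

/-- Total realized reward of a trajectory. -/
def retOf (T : Traj S A) : ℝ := (T.steps.map fun x => x.2.2).sum

variable [DecidableEq S] [DecidableEq A]

/-- State visited at step `h` (1-indexed). -/
def sOf (T : Traj S A) (h : ℕ) : Option S := T.steps[h - 1]?.map Prod.fst

/-- Action taken at step `h`. -/
def aOf (T : Traj S A) (h : ℕ) : Option A := T.steps[h - 1]?.map fun x => x.2.1

/-- Reward received at step `h`. -/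
def rOf (T : Traj S A) (h : ℕ) : ℝ := (T.steps[h - 1]?.map fun x => x.2.2).getD 0

/-- State reached after step `h`. -/
def nxt (T : Traj S A) (h : ℕ) : S := (T.steps[h]?.map Prod.fst).getD T.final

/-- Whether trajectory `T` visits `(s,a)` at step `h`. -/
def hitSA (T : Traj S A) (h : ℕ) (s : S) (a : A) : Bool :=
  decide (sOf T h = some s) && decide (aOf T h = some a)

/-- `n_{s,a}` at step `h`: number of episodes in `D` visiting `(s,a)` at step `h`. -/
def nCount (D : List (Traj S A)) (h : ℕ) (s : S) (a : A) : ℕ :=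
  (D.filter fun T => hitSA T h s a).length

/-- Plug-in estimator of the transition kernel. -/
def Phat (D : List (Traj S A)) (h : ℕ) (s : S) (a : A) (s' : S) : ℝ :=
  if nCount D h s a = 0 then (Fintype.card S : ℝ)⁻¹
  else ((D.filter fun T => hitSA T h s a && decide (nxt T h = s')).length : ℝ) / nCount D h s a

/-- Plug-in estimator of the mean reward. -/
def rhat (D : List (Traj S A)) (h : ℕ) (s : S) (a : A) : ℝ :=
  if nCount D h s a = 0 then 0
  else ((D.filter fun T => hitSA T h s a).map fun T => rOf T h).sum / nCount D h s a

/-- Empirical distribution of a list of samples. -/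
def empDist (l : List S) (s : S) : ℝ := ((l.filter (· = s)).length : ℝ) / l.length

/-- An action maximizing `f`. -/
def argmaxA [Nonempty A] (f : A → ℝ) : A :=
  Classical.choose (Finset.exists_max_image (Finset.univ : Finset A) f Finset.univ_nonempty)

/-- The (deterministic) greedy policy with respect to `Q`. -/
def greedy [Nonempty A] (Q : ℕ → S → A → ℝ) : Policy S A where
  p h s a := if a = argmaxA (Q h s) then 1 else 0
  nonneg := by intro h s a; split <;> norm_num
  sum_one := by intro h s; simp

/-- VPVI (Hoeffding-style) pessimism penalty `Γ_h(s,a) = C·H·ι/√(max(n_{s,a},1))`. -/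
def vpviGamma (Hor : ℕ) (D : List (Traj S A)) (Cc δ : ℝ) (h : ℕ) (s : S) (a : A) : ℝ :=
  Cc * Hor * iotaLog Hor (Fintype.card S) (Fintype.card A) δ /
    Real.sqrt ((max (nCount D h s a) 1 : ℕ) : ℝ)

/-- VPVI value estimates (computed backwards, with truncation and greedy maximization). -/
def vpviV [Nonempty A] (Hor : ℕ) (D : List (Traj S A)) (Cc δ : ℝ) (h : ℕ) : S → ℝ :=
  if hh : Hor + 1 ≤ h then fun _ => 0
  else fun s =>
    Finset.univ.sup' Finset.univ_nonempty fun a =>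
      max 0 (min ((rhat D h s a + ∑ s', Phat D h s a s' * vpviV Hor D Cc δ (h + 1) s')
          - vpviGamma Hor D Cc δ h s a) ((Hor : ℝ) - h + 1))
termination_by Hor + 1 - h
decreasing_by omega

/-- VPVI pessimistic truncated Q-estimates `Q̄_h`. -/
def vpviQbar [Nonempty A] (Hor : ℕ) (D : List (Traj S A)) (Cc δ : ℝ) (h : ℕ) (s : S) (a : A) :
    ℝ :=
  max 0 (min ((rhat D h s a + ∑ s', Phat D h s a s' * vpviV Hor D Cc δ (h + 1) s')
      - vpviGamma Hor D Cc δ h s a) ((Hor : ℝ) - h + 1))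

/-- Output policy of VPVI. -/
def vpviPolicy [Nonempty A] (Hor : ℕ) (D : List (Traj S A)) (Cc δ : ℝ) : Policy S A :=
  greedy (vpviQbar Hor D Cc δ)

/-- APVI Bernstein-style pessimism penalty. -/
def apviGamma (Hor : ℕ) (D : List (Traj S A)) (ι Cbig : ℝ) (h : ℕ) (s : S) (a : A)
    (Vnext : S → ℝ) : ℝ :=
  if nCount D h s a = 0 then Cbig * Hor * ι
  else 2 * Real.sqrt (varDist (Phat D h s a) (fun s' => rhat D h s a + Vnext s') * ι /
        nCount D h s a)
      + 14 * Hor * ι / (3 * nCount D h s a)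

/-- APVI value estimates. -/
def apviV [Nonempty A] (Hor : ℕ) (D : List (Traj S A)) (ι Cbig : ℝ) (h : ℕ) : S → ℝ :=
  if hh : Hor + 1 ≤ h then fun _ => 0
  else fun s =>
    Finset.univ.sup' Finset.univ_nonempty fun a =>
      max 0 (min ((rhat D h s a + ∑ s', Phat D h s a s' * apviV Hor D ι Cbig (h + 1) s')
          - apviGamma Hor D ι Cbig h s a (apviV Hor D ι Cbig (h + 1))) ((Hor : ℝ) - h + 1))
termination_by Hor + 1 - h
decreasing_by all_goals omega

/-- APVI pessimistic truncated Q-estimates `Q̄_h`. -/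
def apviQbar [Nonempty A] (Hor : ℕ) (D : List (Traj S A)) (ι Cbig : ℝ) (h : ℕ) (s : S) (a : A) :
    ℝ :=
  max 0 (min ((rhat D h s a + ∑ s', Phat D h s a s' * apviV Hor D ι Cbig (h + 1) s')
      - apviGamma Hor D ι Cbig h s a (apviV Hor D ι Cbig (h + 1))) ((Hor : ℝ) - h + 1))

/-- Output policy of APVI. -/
def apviPolicy [Nonempty A] (Hor : ℕ) (D : List (Traj S A)) (ι Cbig : ℝ) : Policy S A :=
  greedy (apviQbar Hor D ι Cbig)

/-- The pessimistic augmented MDP `M†` over states `Option S` (`none` is the absorbing state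
`s†`): transitions/rewards agree with `M` on the covered set `Cov`, and all uncovered pairs as
well as `s†` transition deterministically to `s†` with reward `0`. -/
def augMDP (M : FinMDP S A) (Cov : ℕ → S → A → Prop) : FinMDP (Option S) A where
  H := M.H
  P h os a os' :=
    match os, os' with
    | some s, some s' => if Cov h s a then M.P h s a s' else 0
    | some s, none => if Cov h s a then 0 else 1
    | none, some _ => 0
    | none, none => 1
  R h os a :=
    match os with
    | some s => if Cov h s a then M.R h s a else PMF.pure 0
    | none => PMF.pure 0
  d1 os := match os with | some s => M.d1 s | none => 0
  P_nonneg := by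
    intro h os a os'
    rcases os with _ | s <;> rcases os' with _ | s' <;> dsimp only <;> try norm_num
    · split <;> norm_num
    · split
      · exact M.P_nonneg _ _ _ _
      · norm_num
  P_sum := by
    intro h os a
    rcases os with _ | s
    · simp [Fintype.sum_option]
    · by_cases hc : Cov h s a <;> simp [Fintype.sum_option, hc, M.P_sum]
  R_mem := by
    intro h os a x hx
    rcases os with _ | s
    · simp only [PMF.support_pure, Set.mem_singleton_iff] at hx
      simp [hx]
    · by_cases hc : Cov h s a
      · exact M.R_mem h s a x (by simpa [hc] using hx)
      · simp only [hc, if_false, PMF.support_pure, Set.mem_singleton_iff] at hx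
        simp [hx]
  d1_nonneg := by
    intro os; rcases os with _ | s
    · norm_num
    · exact M.d1_nonneg s
  d1_sum := by simp [Fintype.sum_option, M.d1_sum]

/-- Extend a policy on `S` to `Option S` (arbitrarily: uniform at the absorbing state). -/
def liftPolicy [Nonempty A] (π : Policy S A) : Policy (Option S) A where
  p h os a := match os with | some s => π.p h s a | none => (Fintype.card A : ℝ)⁻¹
  nonneg := by
    intro h os a; rcases os with _ | s <;> dsimp only
    · positivity
    · exact π.nonneg _ _ _
  sum_one := by
    intro h os; rcases os with _ | s <;> dsimp only
    · rw [Finset.sum_const, Finset.card_univ, nsmul_eq_mul]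
      exact mul_inv_cancel₀ (Nat.cast_ne_zero.mpr Fintype.card_ne_zero)
    · exact π.sum_one _ _

/-- Restrict a policy on `Option S` to `S`. -/
def restrictPolicy (π : Policy (Option S) A) : Policy S A where
  p h s a := π.p h (some s) a
  nonneg h s a := π.nonneg h (some s) a
  sum_one h s := π.sum_one h (some s)

/-- Empirical transition kernel of the (data-version) pessimistic augmented MDP `M̂†`. -/
def PhatDag (D : List (Traj S A)) (h : ℕ) : Option S → A → Option S → ℝ
  | some s, a, some s' => if nCount D h s a = 0 then 0 else Phat D h s a s'
  | some s, a, none => if nCount D h s a = 0 then 1 else 0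
  | none, _, some _ => 0
  | none, _, none => 1

/-- Empirical reward of the (data-version) pessimistic augmented MDP `M̂†`. -/
def rhatDag (D : List (Traj S A)) (h : ℕ) : Option S → A → ℝ
  | some s, a => rhat D h s a
  | none, _ => 0

/-- Penalty of assumption-free APVI: Bernstein penalty on observed pairs, `0` otherwise. -/
def afGamma (Hor : ℕ) (D : List (Traj S A)) (ι : ℝ) (h : ℕ) (os : Option S) (a : A)
    (Vnext : Option S → ℝ) : ℝ :=
  match os with
  | some s =>
      if nCount D h s a = 0 then 0
      else 2 * Real.sqrt (varDist (PhatDag D h (some s) a)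
            (fun os' => rhatDag D h (some s) a + Vnext os') * ι / nCount D h s a)
          + 14 * Hor * ι / (3 * nCount D h s a)
  | none => 0

/-- Assumption-free APVI value estimates (on the empirical augmented MDP). -/
def afV [Nonempty A] (Hor : ℕ) (D : List (Traj S A)) (ι : ℝ) (h : ℕ) : Option S → ℝ :=
  if hh : Hor + 1 ≤ h then fun _ => 0
  else fun os =>
    Finset.univ.sup' Finset.univ_nonempty fun a =>
      max 0 (min ((rhatDag D h os a + ∑ os', PhatDag D h os a os' * afV Hor D ι (h + 1) os')
          - afGamma Hor D ι h os a (afV Hor D ι (h + 1))) ((Hor : ℝ) - h + 1))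
termination_by Hor + 1 - h
decreasing_by all_goals omega

/-- Assumption-free APVI pessimistic truncated Q-estimates. -/
def afQbar [Nonempty A] (Hor : ℕ) (D : List (Traj S A)) (ι : ℝ) (h : ℕ) (os : Option S) (a : A) :
    ℝ :=
  max 0 (min ((rhatDag D h os a + ∑ os', PhatDag D h os a os' * afV Hor D ι (h + 1) os')
      - afGamma Hor D ι h os a (afV Hor D ι (h + 1))) ((Hor : ℝ) - h + 1))

/-- Output policy of assumption-free APVI, on the augmented state space. -/
def afPolicyAug [Nonempty A] (Hor : ℕ) (D : List (Traj S A)) (ι : ℝ) : Policy (Option S) A :=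
  greedy (afQbar Hor D ι)

/-- Output policy of assumption-free APVI, restricted to the original state space. -/
def afPolicy [Nonempty A] (Hor : ℕ) (D : List (Traj S A)) (ι : ℝ) : Policy S A :=
  restrictPolicy (afPolicyAug Hor D ι)

/-- The local non-asymptotic minimax risk `𝔑_n(𝒫)` of an instance `𝒫 = (μ, M)`:
`sup_{𝒫' ∈ 𝒢} inf_{π̂} max_{𝒬 ∈ {𝒫,𝒫'}} √n · E_𝒬[v⋆(𝒬) − v^{π̂}]`. -/
def locRisk (n : ℕ) (μ : Policy S A) (M : FinMDP S A) : ℝ :=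
  ⨆ Q : {q : Policy S A × FinMDP S A // inG q.1 q.2},
    ⨅ est : List (Traj S A) → Policy S A,
      max (Real.sqrt n * pmfExp (iidPMF (episodePMF M μ) n) fun D => vstar M - vOf M (est D))
          (Real.sqrt n *
            pmfExp (iidPMF (episodePMF Q.1.2 Q.1.1) n) fun D => vstar Q.1.2 - vOf Q.1.2 (est D))

end


noncomputable section AuxVar

open scoped ENNReal

variable {τ τ' : Type}

lemma pmfExp_def (q : PMF τ) (f : τ → ℝ) : pmfExp q f = ∑' t, (q t).toReal * f t := rfl

lemma pmf_summable_toReal (q : PMF τ) : Summable fun t => (q t).toReal :=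
  ENNReal.summable_toReal (by simp [q.tsum_coe])

lemma pmf_tsum_toReal (q : PMF τ) : ∑' t, (q t).toReal = 1 := by
  rw [← ENNReal.tsum_toReal_eq fun a => q.apply_ne_top a, q.tsum_coe, ENNReal.toReal_one]

lemma summable_pmf_mul (q : PMF τ) (f : τ → ℝ) (C : ℝ)
    (hb : ∀ t ∈ q.support, |f t| ≤ C) :
    Summable fun t => (q t).toReal * f t := by
  refine Summable.of_norm_bounded (g := fun t => (q t).toReal * C)
    ((pmf_summable_toReal q).mul_right C) (fun t => ?_)
  rcases eq_or_ne (q t) 0 with h | h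
  · simp [h]
  · rw [Real.norm_eq_abs, abs_mul, abs_of_nonneg ENNReal.toReal_nonneg]
    exact mul_le_mul_of_nonneg_left (hb t h) ENNReal.toReal_nonneg

lemma pmfExp_congr (q : PMF τ) (f g : τ → ℝ) (h : ∀ t ∈ q.support, f t = g t) :
    pmfExp q f = pmfExp q g := by
  refine tsum_congr fun t => ?_
  rcases eq_or_ne (q t) 0 with ht | ht
  · simp [ht]
  · rw [h t ht]

lemma pmfExp_const (q : PMF τ) (c : ℝ) : pmfExp q (fun _ => c) = c := by
  rw [pmfExp_def, tsum_mul_right, pmf_tsum_toReal, one_mul]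

lemma pmfExp_add (q : PMF τ) (f g : τ → ℝ)
    (hf : Summable fun t => (q t).toReal * f t)
    (hg : Summable fun t => (q t).toReal * g t) :
    pmfExp q (fun t => f t + g t) = pmfExp q f + pmfExp q g := by
  simp only [pmfExp_def, mul_add]
  exact Summable.tsum_add hf hg

lemma pmfExp_const_mul (q : PMF τ) (c : ℝ) (f : τ → ℝ) :
    pmfExp q (fun t => c * f t) = c * pmfExp q f := by
  simp only [pmfExp_def, mul_left_comm _ c]
  exact tsum_mul_left

lemma pmfExp_const_add (q : PMF τ) (c : ℝ) (f : τ → ℝ)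
    (hf : Summable fun t => (q t).toReal * f t) :
    pmfExp q (fun t => c + f t) = c + pmfExp q f := by
  rw [pmfExp_add q _ f ((pmf_summable_toReal q).mul_right c) hf, pmfExp_const]

lemma pmfExp_add_const (q : PMF τ) (c : ℝ) (f : τ → ℝ)
    (hf : Summable fun t => (q t).toReal * f t) :
    pmfExp q (fun t => f t + c) = pmfExp q f + c := by
  rw [pmfExp_add q f _ hf ((pmf_summable_toReal q).mul_right c), pmfExp_const]

lemma pmfExp_pure (x : τ) (f : τ → ℝ) : pmfExp (PMF.pure x) f = f x := by
  rw [pmfExp_def, tsum_eq_single x]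
  · simp
  · intro b hb; simp [PMF.pure_apply, hb]

lemma pmfExp_bind (q : PMF τ) (g : τ → PMF τ') (f : τ' → ℝ) (C : ℝ)
    (hb : ∀ b ∈ (q.bind g).support, |f b| ≤ C) :
    pmfExp (q.bind g) f = pmfExp q fun a => pmfExp (g a) f := by
  have hW : Summable fun ab : τ × τ' => (q ab.1).toReal * ((g ab.1) ab.2).toReal := by
    have h1 : Summable fun ab : τ × τ' => (q ab.1 * (g ab.1) ab.2).toReal := by
      refine ENNReal.summable_toReal ?_
      rw [ENNReal.tsum_prod (f := fun a b => q a * (g a) b)]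
      simp only [ENNReal.tsum_mul_left, PMF.tsum_coe, mul_one]
      simp [q.tsum_coe]
    simpa [ENNReal.toReal_mul] using h1
  have hF : Summable (Function.uncurry fun a b => (q a).toReal * (((g a) b).toReal * f b)) := by
    refine Summable.of_norm_bounded
      (g := fun ab : τ × τ' => (q ab.1).toReal * ((g ab.1) ab.2).toReal * C) (hW.mul_right C) ?_
    rintro ⟨a, b⟩
    simp only [Function.uncurry]
    rcases eq_or_ne (q a) 0 with h | h
    · simp [h]
    rcases eq_or_ne ((g a) b) 0 with h' | h'
    · simp [h']
    have hmem : b ∈ (q.bind g).support := by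
      rw [PMF.support_bind]
      exact Set.mem_biUnion h h'
    rw [Real.norm_eq_abs, ← mul_assoc, abs_mul, abs_mul,
      abs_of_nonneg (ENNReal.toReal_nonneg), abs_of_nonneg (ENNReal.toReal_nonneg)]
    exact mul_le_mul_of_nonneg_left (hb b hmem) (by positivity)
  calc pmfExp (q.bind g) f
      = ∑' b, (∑' a, (q a).toReal * ((g a) b).toReal) * f b := by
        rw [pmfExp_def]
        refine tsum_congr fun b => ?_
        rw [PMF.bind_apply, ENNReal.tsum_toReal_eq
          (fun a => ENNReal.mul_ne_top (q.apply_ne_top a) ((g a).apply_ne_top b))]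
        simp [ENNReal.toReal_mul]
    _ = ∑' b, ∑' a, (q a).toReal * (((g a) b).toReal * f b) := by
        refine tsum_congr fun b => ?_
        rw [← tsum_mul_right]
        exact tsum_congr fun a => by ring
    _ = ∑' a, ∑' b, (q a).toReal * (((g a) b).toReal * f b) := Summable.tsum_comm hF
    _ = pmfExp q fun a => pmfExp (g a) f := by
        rw [pmfExp_def]
        exact tsum_congr fun a => by rw [tsum_mul_left, pmfExp_def]

lemma pmfExp_map (q : PMF τ) (φ : τ → τ') (f : τ' → ℝ) (C : ℝ)
    (hb : ∀ b ∈ (q.map φ).support, |f b| ≤ C) :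
    pmfExp (q.map φ) f = pmfExp q fun t => f (φ t) := by
  have hmap : q.map φ = q.bind fun t => PMF.pure (φ t) := rfl
  rw [hmap, pmfExp_bind _ _ f C (by rw [← hmap]; exact hb)]
  simp only [pmfExp_pure]

lemma finPMF_toReal [Fintype τ] (p : τ → ℝ) (h0 : ∀ t, 0 ≤ p t) (h1 : ∑ t, p t = 1) (t : τ) :
    ((finPMF p h0 h1) t).toReal = p t := by
  simp [finPMF, ENNReal.toReal_ofReal (h0 t)]

lemma pmfExp_finPMF [Fintype τ] (p : τ → ℝ) (h0 : ∀ t, 0 ≤ p t) (h1 : ∑ t, p t = 1)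
    (f : τ → ℝ) : pmfExp (finPMF p h0 h1) f = ∑ t, p t * f t := by
  rw [pmfExp_def, tsum_fintype]
  exact Finset.sum_congr rfl fun t _ => by rw [finPMF_toReal]

end AuxVar


noncomputable section AuxVar2

open scoped ENNReal

variable {τ : Type}

lemma abs_sq_le {x b : ℝ} (h : |x| ≤ b) : |x ^ 2| ≤ b ^ 2 := by
  rw [abs_of_nonneg (sq_nonneg x), ← sq_abs]
  exact pow_le_pow_left₀ (abs_nonneg x) h 2

lemma sum_sq_shift [Fintype τ] (p f : τ → ℝ) (h1 : ∑ t, p t = 1) (c : ℝ) :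
    ∑ t, p t * (f t - c) ^ 2 = varDist p f + (∑ t, p t * f t - c) ^ 2 := by
  have key : ∀ t, p t * (f t - c) ^ 2 =
      p t * (f t - ∑ t', p t' * f t') ^ 2 +
        ((2 * ((∑ t', p t' * f t') - c)) * (p t * f t) +
          (((∑ t', p t' * f t') - c) * (-(c + (∑ t', p t' * f t')))) * p t) := fun t => by ring
  rw [Finset.sum_congr rfl fun t _ => key t, Finset.sum_add_distrib, Finset.sum_add_distrib,
    ← Finset.mul_sum, ← Finset.mul_sum, h1]
  unfold varDist
  ring

lemma pmfVar_def (q : PMF τ) (f : τ → ℝ) :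
    pmfVar q f = pmfExp q (fun t => (f t - pmfExp q f) ^ 2) := rfl

lemma pmfExp_sq_shift (q : PMF τ) (f : τ → ℝ) (C : ℝ)
    (hb : ∀ t ∈ q.support, |f t| ≤ C) (c : ℝ) :
    pmfExp q (fun t => (f t - c) ^ 2) = pmfVar q f + (pmfExp q f - c) ^ 2 := by
  have hf : Summable fun t => (q t).toReal * f t := summable_pmf_mul q f C hb
  have hb2 : ∀ t ∈ q.support, |(f t - pmfExp q f) ^ 2| ≤ (C + |pmfExp q f|) ^ 2 := fun t ht =>
    abs_sq_le ((abs_sub _ _).trans (add_le_add_left (hb t ht) _))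
  have hsq : Summable fun t => (q t).toReal * (f t - pmfExp q f) ^ 2 :=
    summable_pmf_mul q _ _ hb2
  have hlin : Summable fun t => (q t).toReal * ((2 * (pmfExp q f - c)) * f t) :=
    (hf.mul_left (2 * (pmfExp q f - c))).congr fun t => by ring
  have hkey : ∀ t, (f t - c) ^ 2 = (f t - pmfExp q f) ^ 2 +
      ((2 * (pmfExp q f - c)) * f t + (pmfExp q f - c) * (-(c + pmfExp q f))) := fun t => by ring
  have hsum2 : Summable fun t => (q t).toReal *
      ((2 * (pmfExp q f - c)) * f t + (pmfExp q f - c) * (-(c + pmfExp q f))) :=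
    (hlin.add ((pmf_summable_toReal q).mul_right
      ((pmfExp q f - c) * (-(c + pmfExp q f))))).congr fun t => by ring
  calc pmfExp q (fun t => (f t - c) ^ 2)
      = pmfExp q (fun t => (f t - pmfExp q f) ^ 2 +
          ((2 * (pmfExp q f - c)) * f t + (pmfExp q f - c) * (-(c + pmfExp q f)))) := by
        simp only [hkey]
    _ = pmfVar q f + ((2 * (pmfExp q f - c)) * pmfExp q f
          + (pmfExp q f - c) * (-(c + pmfExp q f))) := by
        rw [pmfExp_add q _ _ hsq hsum2,
          pmfExp_add q _ _ hlin ((pmf_summable_toReal q).mul_right _),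
          pmfExp_const_mul, pmfExp_const, ← pmfVar_def]
    _ = pmfVar q f + (pmfExp q f - c) ^ 2 := by ring

lemma pmfVarR_eq_pmfVar_id (q : PMF ℝ) : pmfVarR q = pmfVar q (fun x => x) := rfl

lemma pmfMean_eq_pmfExp_id (q : PMF ℝ) : pmfMean q = pmfExp q (fun x => x) := rfl

lemma sum_exchange {α β γ : Type} [Fintype α] [Fintype β] [Fintype γ]
    (u : α → ℝ) (w : α → β → ℝ) (d : β → γ → ℝ) (G : γ → ℝ) :
    ∑ c, (∑ a, u a * ∑ b, w a b * d b c) * G c =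
      ∑ a, u a * ∑ b, w a b * ∑ c, d b c * G c := by
  have h1 : ∀ c, (∑ a, u a * ∑ b, w a b * d b c) * G c
      = ∑ a, ∑ b, u a * (w a b * (d b c * G c)) := fun c => by
    simp only [Finset.sum_mul, Finset.mul_sum, mul_assoc]
  have h2 : ∀ a, u a * ∑ b, w a b * ∑ c, d b c * G c
      = ∑ b, ∑ c, u a * (w a b * (d b c * G c)) := fun a => by
    simp only [Finset.mul_sum, mul_assoc]
  rw [Finset.sum_congr rfl fun c (_ : c ∈ Finset.univ) => h1 c,
    Finset.sum_congr rfl fun a (_ : a ∈ Finset.univ) => h2 a, Finset.sum_comm]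
  exact Finset.sum_congr rfl fun a _ => Finset.sum_comm

section MDPAux

variable {S A : Type} [Fintype S] [Fintype A]

/-- A trajectory with `k` steps and rewards in `[0,1]`. -/
def GoodT (k : ℕ) (T : Traj S A) : Prop :=
  T.steps.length = k ∧ ∀ x ∈ T.steps, 0 ≤ x.2.2 ∧ x.2.2 ≤ 1

lemma list_ret_bound : ∀ l : List (S × A × ℝ), (∀ x ∈ l, 0 ≤ x.2.2 ∧ x.2.2 ≤ 1) →
    0 ≤ (l.map fun x => x.2.2).sum ∧ (l.map fun x => x.2.2).sum ≤ l.length := by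
  intro l
  induction l with
  | nil => simp
  | cons y l ih =>
    intro h
    obtain ⟨h1, h2⟩ := h y List.mem_cons_self
    obtain ⟨ih1, ih2⟩ := ih fun x hx => h x (List.mem_cons_of_mem _ hx)
    simp only [List.map_cons, List.sum_cons, List.length_cons]
    constructor
    · linarith
    · push_cast
      linarith

lemma abs_retOf_le {k : ℕ} {T : Traj S A} (hT : GoodT k T) : |retOf T| ≤ (k : ℝ) := by
  obtain ⟨hlen, hrew⟩ := hT
  obtain ⟨h1, h2⟩ := list_ret_bound T.steps hrew
  rw [abs_le]
  refine ⟨le_trans (neg_nonpos.mpr (Nat.cast_nonneg k)) h1, ?_⟩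
  calc retOf T ≤ (T.steps.length : ℝ) := h2
    _ = (k : ℝ) := by rw [hlen]

lemma good_traj (M : FinMDP S A) (π : Policy S A) :
    ∀ (k h : ℕ) (s : S) (T : Traj S A), T ∈ (trajFrom M π h k s).support → GoodT k T := by
  intro k
  induction k with
  | zero =>
    intro h s T hT
    rw [show trajFrom M π h 0 s = PMF.pure ⟨[], s⟩ from rfl, PMF.support_pure,
      Set.mem_singleton_iff] at hT
    subst hT
    exact ⟨rfl, by simp⟩
  | succ k ih =>
    intro h s T hT
    rw [trajFrom] at hT
    simp only [PMF.support_bind, PMF.support_map, Set.mem_iUnion, Set.mem_image] at hT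
    obtain ⟨a, _, r, hr, s', _, T0, hT0, rfl⟩ := hT
    have hr01 := M.R_mem h s a r hr
    obtain ⟨hlen, hrew⟩ := ih (h + 1) s' T0 hT0
    refine ⟨by simp [hlen], ?_⟩
    intro x hx
    rcases List.mem_cons.mp hx with rfl | hx
    · exact ⟨hr01.1, hr01.2⟩
    · exact hrew x hx

lemma good_trans (M : FinMDP S A) (π : Policy S A) (h k : ℕ) (s : S) (a : A) (r : ℝ) :
    ∀ T ∈ ((transPMF M h s a).bind fun s' =>
        (trajFrom M π (h + 1) k s').map fun T =>
          (⟨(s, a, r) :: T.steps, T.final⟩ : Traj S A)).support,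
      ∃ (s' : S) (T0 : Traj S A), T0 ∈ (trajFrom M π (h + 1) k s').support ∧
        T = ⟨(s, a, r) :: T0.steps, T0.final⟩ := by
  intro T hT
  simp only [PMF.support_bind, PMF.support_map, Set.mem_iUnion, Set.mem_image] at hT
  obtain ⟨s', _, T0, hT0, rfl⟩ := hT
  exact ⟨s', T0, hT0, rfl⟩

lemma good_rbind (M : FinMDP S A) (π : Policy S A) (h k : ℕ) (s : S) (a : A) :
    ∀ T ∈ ((M.R h s a).bind fun r =>
        (transPMF M h s a).bind fun s' =>
          (trajFrom M π (h + 1) k s').map fun T =>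
            (⟨(s, a, r) :: T.steps, T.final⟩ : Traj S A)).support,
      GoodT (k + 1) T := by
  intro T hT
  simp only [PMF.support_bind, PMF.support_map, Set.mem_iUnion, Set.mem_image] at hT
  obtain ⟨r, hr, s', _, T0, hT0, rfl⟩ := hT
  have hr01 := M.R_mem h s a r hr
  obtain ⟨hlen, hrew⟩ := good_traj M π k (h + 1) s' T0 hT0
  refine ⟨by simp [hlen], ?_⟩
  intro x hx
  rcases List.mem_cons.mp hx with rfl | hx
  · exact ⟨hr01.1, hr01.2⟩
  · exact hrew x hx

lemma retOf_cons (s : S) (a : A) (r : ℝ) (T : Traj S A) :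
    retOf (⟨(s, a, r) :: T.steps, T.final⟩ : Traj S A) = r + retOf T := by
  simp [retOf]

lemma Vpi_of_le (M : FinMDP S A) (π : Policy S A) (h : ℕ) (hh : h ≤ M.H) (s : S) :
    Vpi M π h s = ∑ a, π.p h s a *
      (meanR M h s a + ∑ s', M.P h s a s' * Vpi M π (h + 1) s') := by
  rw [Vpi, dif_neg (by omega)]

lemma Vpi_of_gt (M : FinMDP S A) (π : Policy S A) (h : ℕ) (hh : M.H + 1 ≤ h) (s : S) :
    Vpi M π h s = 0 := by
  rw [Vpi, dif_pos hh]

lemma Vpi_eq_sum_Q (M : FinMDP S A) (π : Policy S A) (h : ℕ) (hh : h ≤ M.H) (s : S) :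
    Vpi M π h s = ∑ a, π.p h s a * Qpi M π h s a :=
  Vpi_of_le M π h hh s

lemma dStateFrom_le [DecidableEq S] (M : FinMDP S A) (π : Policy S A) (h0 t : ℕ)
    (ht : t ≤ h0) (s0 s : S) :
    dStateFrom M π h0 s0 t s = if s = s0 then 1 else 0 := by
  rw [dStateFrom, dif_pos ht]

lemma dStateFrom_gt [DecidableEq S] (M : FinMDP S A) (π : Policy S A) (h0 t : ℕ)
    (ht : h0 < t) (s0 s' : S) :
    dStateFrom M π h0 s0 t s' = ∑ s, ∑ a,
      dStateFrom M π h0 s0 (t - 1) s * π.p (t - 1) s a * M.P (t - 1) s a s' := by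
  rw [dStateFrom, dif_neg (by omega)]

lemma dStateFrom_chapman [DecidableEq S] (M : FinMDP S A) (π : Policy S A) (h : ℕ) (s : S) :
    ∀ t, h + 1 ≤ t → ∀ s'', dStateFrom M π h s t s'' =
      ∑ a, π.p h s a * ∑ s', M.P h s a s' * dStateFrom M π (h + 1) s' t s'' := by
  intro t ht
  induction t, ht using Nat.le_induction with
  | base =>
    intro s''
    rw [dStateFrom_gt M π h (h + 1) (by omega)]
    simp only [Nat.add_sub_cancel]
    have hd : ∀ s1 : S, dStateFrom M π h s h s1 = if s1 = s then 1 else 0 :=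
      fun s1 => dStateFrom_le M π h h le_rfl s s1
    have hd' : ∀ s' : S, dStateFrom M π (h + 1) s' (h + 1) s'' = if s'' = s' then 1 else 0 :=
      fun s' => dStateFrom_le M π (h + 1) (h + 1) le_rfl s' s''
    simp only [hd, hd', ite_mul, one_mul, zero_mul, mul_ite, mul_one, mul_zero]
    rw [Finset.sum_comm]
    refine Finset.sum_congr rfl fun a _ => ?_
    rw [Finset.sum_ite_eq' Finset.univ s (fun x => π.p h x a * M.P h x a s''),
      Finset.sum_ite_eq Finset.univ s'' (fun x1 => M.P h s a x1)]
    simp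
  | succ t ht ih =>
    intro s''
    rw [dStateFrom_gt M π h (t + 1) (by omega)]
    simp only [Nat.add_sub_cancel]
    have hR : ∀ s' : S, dStateFrom M π (h + 1) s' (t + 1) s'' =
        ∑ s1, ∑ a', dStateFrom M π (h + 1) s' t s1 * π.p t s1 a' * M.P t s1 a' s'' := by
      intro s'
      rw [dStateFrom_gt M π (h + 1) (t + 1) (by omega)]
      simp only [Nat.add_sub_cancel]
    simp only [ih]
    calc ∑ s1, ∑ a', (∑ a, π.p h s a * ∑ s', M.P h s a s' * dStateFrom M π (h + 1) s' t s1)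
            * π.p t s1 a' * M.P t s1 a' s''
        = ∑ s1, (∑ a, π.p h s a * ∑ s', M.P h s a s' * dStateFrom M π (h + 1) s' t s1)
            * ∑ a', π.p t s1 a' * M.P t s1 a' s'' := by
          refine Finset.sum_congr rfl fun s1 _ => ?_
          rw [Finset.mul_sum]
          exact Finset.sum_congr rfl fun a' _ => by ring
      _ = ∑ a, π.p h s a * ∑ s', M.P h s a s' * ∑ s1, dStateFrom M π (h + 1) s' t s1
            * ∑ a', π.p t s1 a' * M.P t s1 a' s'' :=
          sum_exchange _ _ _ _
      _ = ∑ a, π.p h s a * ∑ s', M.P h s a s' * dStateFrom M π (h + 1) s' (t + 1) s'' := by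
          refine Finset.sum_congr rfl fun a _ => ?_
          congr 1
          refine Finset.sum_congr rfl fun s' _ => ?_
          congr 1
          rw [hR s']
          refine Finset.sum_congr rfl fun s1 _ => ?_
          rw [Finset.mul_sum]
          exact Finset.sum_congr rfl fun a' _ => by ring

end MDPAux

end AuxVar2


noncomputable section MainVar

variable {S A : Type} [Fintype S] [Fintype A] [DecidableEq S] [DecidableEq A]

lemma traj_exp_var (M : FinMDP S A) (π : Policy S A) :
    ∀ (k h : ℕ) (s : S), h + k = M.H + 1 →
      pmfExp (trajFrom M π h k s) retOf = Vpi M π h s ∧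
      pmfVar (trajFrom M π h k s) retOf =
        ∑ t ∈ Finset.Icc h M.H,
          ((∑ st, ∑ at', dStateFrom M π h s t st * π.p t st at' *
              varTot M t st at' (Vpi M π (t + 1)))
            + ∑ st, dStateFrom M π h s t st *
                varDist (π.p t st) (fun a => Qpi M π t st a)) := by
  intro k
  induction k with
  | zero =>
    intro h s hk
    have h0 : trajFrom M π h 0 s = PMF.pure ⟨[], s⟩ := rfl
    have he : pmfExp (trajFrom M π h 0 s) retOf = 0 := by
      rw [h0, pmfExp_pure]; simp [retOf]
    constructor
    · rw [he, Vpi_of_gt M π h (by omega) s]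
    · rw [pmfVar_def, he, h0, pmfExp_pure,
        Finset.Icc_eq_empty (show ¬ h ≤ M.H by omega), Finset.sum_empty]
      simp [retOf]
  | succ k ih =>
    intro h s hk
    have hh : h ≤ M.H := by omega
    have hk' : (h + 1) + k = M.H + 1 := by omega
    have IHe : ∀ s', pmfExp (trajFrom M π (h + 1) k s') retOf = Vpi M π (h + 1) s' :=
      fun s' => (ih (h + 1) s' hk').1
    have IHv : ∀ s', pmfVar (trajFrom M π (h + 1) k s') retOf =
        ∑ t ∈ Finset.Icc (h + 1) M.H,
          ((∑ st, ∑ at', dStateFrom M π (h + 1) s' t st * π.p t st at' *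
              varTot M t st at' (Vpi M π (t + 1)))
            + ∑ st, dStateFrom M π (h + 1) s' t st *
                varDist (π.p t st) (fun a => Qpi M π t st a)) :=
      fun s' => (ih (h + 1) s' hk').2
    have hgood : ∀ s' T, T ∈ (trajFrom M π (h + 1) k s').support → |retOf T| ≤ (k : ℝ) :=
      fun s' T hT => abs_retOf_le (good_traj M π k (h + 1) s' T hT)
    -- innermost: shifted second moment of the continuation
    have hin : ∀ (s' : S) (c : ℝ),
        pmfExp (trajFrom M π (h + 1) k s') (fun T => (retOf T - c) ^ 2)
          = pmfVar (trajFrom M π (h + 1) k s') retOf + (Vpi M π (h + 1) s' - c) ^ 2 := by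
      intro s' c
      rw [pmfExp_sq_shift _ retOf (k : ℝ) (hgood s') c, IHe s']
    -- map stage
    have hmap_e : ∀ (a : A) (r : ℝ) (s' : S),
        pmfExp ((trajFrom M π (h + 1) k s').map fun T =>
            (⟨(s, a, r) :: T.steps, T.final⟩ : Traj S A)) retOf
          = r + Vpi M π (h + 1) s' := by
      intro a r s'
      have hbnd : ∀ T ∈ ((trajFrom M π (h + 1) k s').map fun T =>
          (⟨(s, a, r) :: T.steps, T.final⟩ : Traj S A)).support, |retOf T| ≤ |r| + (k : ℝ) := by
        intro T hT
        rw [PMF.support_map] at hT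
        obtain ⟨T0, hT0, rfl⟩ := hT
        rw [retOf_cons]
        exact (abs_add_le r (retOf T0)).trans
          (add_le_add_right (hgood s' T0 hT0) _)
      rw [pmfExp_map _ _ retOf _ hbnd,
        pmfExp_congr _ _ (fun T => r + retOf T) (fun T _ => retOf_cons s a r T),
        pmfExp_const_add _ r retOf (summable_pmf_mul _ retOf (k : ℝ) (hgood s')), IHe s']
    have hmap_v : ∀ (a : A) (r : ℝ) (s' : S) (c : ℝ),
        pmfExp ((trajFrom M π (h + 1) k s').map fun T =>
            (⟨(s, a, r) :: T.steps, T.final⟩ : Traj S A)) (fun T => (retOf T - c) ^ 2)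
          = pmfVar (trajFrom M π (h + 1) k s') retOf + (r + Vpi M π (h + 1) s' - c) ^ 2 := by
      intro a r s' c
      have hbnd : ∀ T ∈ ((trajFrom M π (h + 1) k s').map fun T =>
          (⟨(s, a, r) :: T.steps, T.final⟩ : Traj S A)).support,
          |(retOf T - c) ^ 2| ≤ (|r| + (k : ℝ) + |c|) ^ 2 := by
        intro T hT
        rw [PMF.support_map] at hT
        obtain ⟨T0, hT0, rfl⟩ := hT
        refine abs_sq_le ?_
        rw [retOf_cons]
        have h1 := hgood s' T0 hT0
        have h2 := abs_add_le r (retOf T0)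
        calc |r + retOf T0 - c| ≤ |r + retOf T0| + |c| := abs_sub _ _
          _ ≤ |r| + (k : ℝ) + |c| := by linarith
      rw [pmfExp_map _ _ _ _ hbnd,
        pmfExp_congr _ _ (fun T => (retOf T - (c - r)) ^ 2)
          (fun T _ => by rw [retOf_cons]; ring),
        hin s' (c - r)]
      ring
    -- transition stage
    have htrans_e : ∀ (a : A) (r : ℝ),
        pmfExp ((transPMF M h s a).bind fun s' =>
            (trajFrom M π (h + 1) k s').map fun T =>
              (⟨(s, a, r) :: T.steps, T.final⟩ : Traj S A)) retOf
          = r + ∑ s', M.P h s a s' * Vpi M π (h + 1) s' := by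
      intro a r
      have hbnd : ∀ T ∈ ((transPMF M h s a).bind fun s' =>
          (trajFrom M π (h + 1) k s').map fun T =>
            (⟨(s, a, r) :: T.steps, T.final⟩ : Traj S A)).support,
          |retOf T| ≤ |r| + (k : ℝ) := by
        intro T hT
        obtain ⟨s', T0, hT0, rfl⟩ := good_trans M π h k s a r T hT
        rw [retOf_cons]
        exact (abs_add_le r (retOf T0)).trans (add_le_add_right (hgood s' T0 hT0) _)
      rw [pmfExp_bind _ _ retOf _ hbnd,
        show transPMF M h s a = finPMF (M.P h s a) (M.P_nonneg h s a) (M.P_sum h s a) from rfl,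
        pmfExp_finPMF]
      simp only [hmap_e]
      rw [Finset.sum_congr rfl (fun s' (_ : s' ∈ Finset.univ) =>
          (mul_add (M.P h s a s') r (Vpi M π (h + 1) s'))),
        Finset.sum_add_distrib, ← Finset.sum_mul, M.P_sum, one_mul]
    have htrans_v : ∀ (a : A) (r c : ℝ),
        pmfExp ((transPMF M h s a).bind fun s' =>
            (trajFrom M π (h + 1) k s').map fun T =>
              (⟨(s, a, r) :: T.steps, T.final⟩ : Traj S A)) (fun T => (retOf T - c) ^ 2)
          = (∑ s', M.P h s a s' * pmfVar (trajFrom M π (h + 1) k s') retOf)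
            + varDist (M.P h s a) (fun s' => Vpi M π (h + 1) s')
            + (r + (∑ s', M.P h s a s' * Vpi M π (h + 1) s') - c) ^ 2 := by
      intro a r c
      have hbnd : ∀ T ∈ ((transPMF M h s a).bind fun s' =>
          (trajFrom M π (h + 1) k s').map fun T =>
            (⟨(s, a, r) :: T.steps, T.final⟩ : Traj S A)).support,
          |(retOf T - c) ^ 2| ≤ (|r| + (k : ℝ) + |c|) ^ 2 := by
        intro T hT
        obtain ⟨s', T0, hT0, rfl⟩ := good_trans M π h k s a r T hT
        refine abs_sq_le ?_
        rw [retOf_cons]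
        have h1 := hgood s' T0 hT0
        have h2 := abs_add_le r (retOf T0)
        calc |r + retOf T0 - c| ≤ |r + retOf T0| + |c| := abs_sub _ _
          _ ≤ |r| + (k : ℝ) + |c| := by linarith
      rw [pmfExp_bind _ _ _ _ hbnd,
        show transPMF M h s a = finPMF (M.P h s a) (M.P_nonneg h s a) (M.P_sum h s a) from rfl,
        pmfExp_finPMF]
      simp only [hmap_v]
      rw [Finset.sum_congr rfl (fun s' (_ : s' ∈ Finset.univ) =>
          (show M.P h s a s' * (pmfVar (trajFrom M π (h + 1) k s') retOf
              + (r + Vpi M π (h + 1) s' - c) ^ 2)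
            = M.P h s a s' * pmfVar (trajFrom M π (h + 1) k s') retOf
              + M.P h s a s' * (Vpi M π (h + 1) s' - (c - r)) ^ 2 from by ring)),
        Finset.sum_add_distrib,
        sum_sq_shift (M.P h s a) (fun s' => Vpi M π (h + 1) s') (M.P_sum h s a) (c - r)]
      ring
    -- reward stage
    have hRsupp : ∀ (a : A) (r : ℝ), r ∈ (M.R h s a).support → |r| ≤ 1 := by
      intro a r hr
      have := M.R_mem h s a r hr
      rw [Set.mem_Icc] at this
      rw [abs_le]
      exact ⟨by linarith [this.1], this.2⟩
    have hR_e : ∀ a : A,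
        pmfExp ((M.R h s a).bind fun r =>
            (transPMF M h s a).bind fun s' =>
              (trajFrom M π (h + 1) k s').map fun T =>
                (⟨(s, a, r) :: T.steps, T.final⟩ : Traj S A)) retOf
          = Qpi M π h s a := by
      intro a
      have hbnd : ∀ T ∈ ((M.R h s a).bind fun r =>
          (transPMF M h s a).bind fun s' =>
            (trajFrom M π (h + 1) k s').map fun T =>
              (⟨(s, a, r) :: T.steps, T.final⟩ : Traj S A)).support,
          |retOf T| ≤ (k : ℝ) + 1 := by
        intro T hT
        have := abs_retOf_le (good_rbind M π h k s a T hT)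
        push_cast at this
        linarith
      rw [pmfExp_bind _ _ retOf _ hbnd]
      simp only [htrans_e]
      rw [pmfExp_add_const (M.R h s a) (∑ s', M.P h s a s' * Vpi M π (h + 1) s')
        (fun r => r) (summable_pmf_mul (M.R h s a) (fun r => r) 1 (hRsupp a))]
      rfl
    have hR_v : ∀ (a : A) (c : ℝ),
        pmfExp ((M.R h s a).bind fun r =>
            (transPMF M h s a).bind fun s' =>
              (trajFrom M π (h + 1) k s').map fun T =>
                (⟨(s, a, r) :: T.steps, T.final⟩ : Traj S A)) (fun T => (retOf T - c) ^ 2)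
          = (∑ s', M.P h s a s' * pmfVar (trajFrom M π (h + 1) k s') retOf)
            + varTot M h s a (Vpi M π (h + 1)) + (Qpi M π h s a - c) ^ 2 := by
      intro a c
      have hbnd : ∀ T ∈ ((M.R h s a).bind fun r =>
          (transPMF M h s a).bind fun s' =>
            (trajFrom M π (h + 1) k s').map fun T =>
              (⟨(s, a, r) :: T.steps, T.final⟩ : Traj S A)).support,
          |(retOf T - c) ^ 2| ≤ ((k : ℝ) + 1 + |c|) ^ 2 := by
        intro T hT
        refine abs_sq_le ?_
        have h1 := abs_retOf_le (good_rbind M π h k s a T hT)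
        push_cast at h1
        calc |retOf T - c| ≤ |retOf T| + |c| := abs_sub _ _
          _ ≤ (k : ℝ) + 1 + |c| := by linarith
      rw [pmfExp_bind _ _ _ _ hbnd]
      simp only [htrans_v]
      rw [show (fun r : ℝ => (∑ s', M.P h s a s' * pmfVar (trajFrom M π (h + 1) k s') retOf)
            + varDist (M.P h s a) (fun s' => Vpi M π (h + 1) s')
            + (r + (∑ s', M.P h s a s' * Vpi M π (h + 1) s') - c) ^ 2)
          = (fun r : ℝ => ((∑ s', M.P h s a s' * pmfVar (trajFrom M π (h + 1) k s') retOf)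
            + varDist (M.P h s a) (fun s' => Vpi M π (h + 1) s'))
            + (r - (c - ∑ s', M.P h s a s' * Vpi M π (h + 1) s')) ^ 2)
          from funext fun r => by ring]
      rw [pmfExp_const_add _ _ _ (summable_pmf_mul (M.R h s a) _
        ((1 + |c - ∑ s', M.P h s a s' * Vpi M π (h + 1) s'|) ^ 2) (fun r hr =>
          abs_sq_le ((abs_sub _ _).trans (add_le_add_left (hRsupp a r hr) _))))]
      rw [pmfExp_sq_shift (M.R h s a) (fun r => r) 1 (hRsupp a)
        (c - ∑ s', M.P h s a s' * Vpi M π (h + 1) s')]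
      have e1 : pmfVar (M.R h s a) (fun x => x) = varR M h s a := rfl
      have e2 : pmfExp (M.R h s a) (fun x => x) = meanR M h s a := rfl
      have e3 : varTot M h s a (Vpi M π (h + 1))
          = varR M h s a + varDist (M.P h s a) (fun s' => Vpi M π (h + 1) s') := rfl
      have e4 : Qpi M π h s a = meanR M h s a + ∑ s', M.P h s a s' * Vpi M π (h + 1) s' := rfl
      rw [e1, e2, e3, e4]
      ring
    -- top level
    have hunf : trajFrom M π h (k + 1) s = (actPMF M π h s).bind fun a =>
        (M.R h s a).bind fun r =>
          (transPMF M h s a).bind fun s' =>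
            (trajFrom M π (h + 1) k s').map fun T => ⟨(s, a, r) :: T.steps, T.final⟩ := by
      rw [trajFrom]
    have hgood1 : ∀ T ∈ (trajFrom M π h (k + 1) s).support, |retOf T| ≤ (k : ℝ) + 1 := by
      intro T hT
      have := abs_retOf_le (good_traj M π (k + 1) h s T hT)
      push_cast at this
      linarith
    have htop_e : pmfExp (trajFrom M π h (k + 1) s) retOf = Vpi M π h s := by
      rw [hunf, pmfExp_bind _ _ retOf ((k : ℝ) + 1) (by rw [← hunf]; exact hgood1),
        show actPMF M π h s = finPMF (π.p h s) (π.nonneg h s) (π.sum_one h s) from rfl,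
        pmfExp_finPMF]
      simp only [hR_e]
      exact (Vpi_eq_sum_Q M π h hh s).symm
    refine ⟨htop_e, ?_⟩
    -- variance
    have hbnd2 : ∀ T ∈ ((actPMF M π h s).bind fun a =>
        (M.R h s a).bind fun r =>
          (transPMF M h s a).bind fun s' =>
            (trajFrom M π (h + 1) k s').map fun T =>
              (⟨(s, a, r) :: T.steps, T.final⟩ : Traj S A)).support,
        |(retOf T - Vpi M π h s) ^ 2| ≤ ((k : ℝ) + 1 + |Vpi M π h s|) ^ 2 := by
      rw [← hunf]
      intro T hT
      refine abs_sq_le ?_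
      have h1 := hgood1 T hT
      calc |retOf T - Vpi M π h s| ≤ |retOf T| + |Vpi M π h s| := abs_sub _ _
        _ ≤ (k : ℝ) + 1 + |Vpi M π h s| := by linarith
    rw [pmfVar_def, htop_e, hunf,
      pmfExp_bind _ _ _ _ hbnd2,
      show actPMF M π h s = finPMF (π.p h s) (π.nonneg h s) (π.sum_one h s) from rfl,
      pmfExp_finPMF]
    simp only [hR_v]
    -- split the action-level sum
    rw [Finset.sum_congr rfl (fun a (_ : a ∈ Finset.univ) =>
      (show π.p h s a * ((∑ s', M.P h s a s' * pmfVar (trajFrom M π (h + 1) k s') retOf)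
          + varTot M h s a (Vpi M π (h + 1)) + (Qpi M π h s a - Vpi M π h s) ^ 2)
        = π.p h s a * (∑ s', M.P h s a s' * pmfVar (trajFrom M π (h + 1) k s') retOf)
          + π.p h s a * varTot M h s a (Vpi M π (h + 1))
          + π.p h s a * (Qpi M π h s a - Vpi M π h s) ^ 2 from by ring)),
      Finset.sum_add_distrib, Finset.sum_add_distrib]
    -- third summand is varDist of Q
    rw [sum_sq_shift (π.p h s) (fun a => Qpi M π h s a) (π.sum_one h s) (Vpi M π h s)]
    have hzero : (∑ a, π.p h s a * Qpi M π h s a) - Vpi M π h s = 0 := by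
      rw [← Vpi_eq_sum_Q M π h hh s]; ring
    rw [hzero]
    -- split RHS at t = h
    have hIcc : Finset.Icc h M.H = insert h (Finset.Icc (h + 1) M.H) := by
      ext x
      simp only [Finset.mem_Icc, Finset.mem_insert]
      omega
    rw [hIcc, Finset.sum_insert (by simp only [Finset.mem_Icc]; omega)]
    have hdh : ∀ st : S, dStateFrom M π h s h st = if st = s then 1 else 0 :=
      fun st => dStateFrom_le M π h h le_rfl s st
    have hhead1 : (∑ st, ∑ at', dStateFrom M π h s h st * π.p h st at' *
        varTot M h st at' (Vpi M π (h + 1)))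
        = ∑ at', π.p h s at' * varTot M h s at' (Vpi M π (h + 1)) := by
      simp only [hdh, ite_mul, one_mul, zero_mul]
      rw [Finset.sum_comm]
      refine Finset.sum_congr rfl fun at' _ => ?_
      rw [Finset.sum_ite_eq' Finset.univ s
        (fun st => π.p h st at' * varTot M h st at' (Vpi M π (h + 1)))]
      simp
    have hhead2 : (∑ st, dStateFrom M π h s h st *
        varDist (π.p h st) (fun a => Qpi M π h st a))
        = varDist (π.p h s) (fun a => Qpi M π h s a) := by
      simp only [hdh, ite_mul, one_mul, zero_mul]
      rw [Finset.sum_ite_eq' Finset.univ s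
        (fun st => varDist (π.p h st) (fun a => Qpi M π h st a))]
      simp
    rw [hhead1, hhead2]
    -- tail via Chapman--Kolmogorov
    have htail : (∑ t ∈ Finset.Icc (h + 1) M.H,
        ((∑ st, ∑ at', dStateFrom M π h s t st * π.p t st at' *
            varTot M t st at' (Vpi M π (t + 1)))
          + ∑ st, dStateFrom M π h s t st *
              varDist (π.p t st) (fun a => Qpi M π t st a)))
        = ∑ a, π.p h s a *
            ∑ s', M.P h s a s' * pmfVar (trajFrom M π (h + 1) k s') retOf := by
      have hcomb : ∀ t ∈ Finset.Icc (h + 1) M.H,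
          ((∑ st, ∑ at', dStateFrom M π h s t st * π.p t st at' *
              varTot M t st at' (Vpi M π (t + 1)))
            + ∑ st, dStateFrom M π h s t st *
                varDist (π.p t st) (fun a => Qpi M π t st a))
          = ∑ a, π.p h s a * ∑ s', M.P h s a s' *
              ((∑ st, ∑ at', dStateFrom M π (h + 1) s' t st * π.p t st at' *
                  varTot M t st at' (Vpi M π (t + 1)))
                + ∑ st, dStateFrom M π (h + 1) s' t st *
                    varDist (π.p t st) (fun a => Qpi M π t st a)) := by
        intro t ht
        rw [Finset.mem_Icc] at ht
        have hc := dStateFrom_chapman M π h s t ht.1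
        have hfold : ∀ (h0 : ℕ) (s0 : S),
            ((∑ st, ∑ at', dStateFrom M π h0 s0 t st * π.p t st at' *
                varTot M t st at' (Vpi M π (t + 1)))
              + ∑ st, dStateFrom M π h0 s0 t st *
                  varDist (π.p t st) (fun a => Qpi M π t st a))
            = ∑ st, dStateFrom M π h0 s0 t st *
                ((∑ at', π.p t st at' * varTot M t st at' (Vpi M π (t + 1)))
                  + varDist (π.p t st) (fun a => Qpi M π t st a)) := by
          intro h0 s0
          rw [← Finset.sum_add_distrib]
          refine Finset.sum_congr rfl fun st _ => ?_
          rw [mul_add, Finset.mul_sum]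
          congr 1
          exact Finset.sum_congr rfl fun at' _ => by ring
        rw [hfold h s]
        simp only [hc]
        rw [sum_exchange (π.p h s) (fun a s' => M.P h s a s')
          (fun s' st => dStateFrom M π (h + 1) s' t st)
          (fun st => (∑ at', π.p t st at' * varTot M t st at' (Vpi M π (t + 1)))
            + varDist (π.p t st) (fun a => Qpi M π t st a))]
        refine Finset.sum_congr rfl fun a _ => ?_
        congr 1
        refine Finset.sum_congr rfl fun s' _ => ?_
        congr 1
        exact (hfold (h + 1) s').symm
      rw [Finset.sum_congr rfl hcomb, Finset.sum_comm]
      refine Finset.sum_congr rfl fun a _ => ?_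
      rw [← Finset.mul_sum]
      congr 1
      rw [Finset.sum_comm]
      refine Finset.sum_congr rfl fun s' _ => ?_
      rw [← Finset.mul_sum]
      congr 1
      exact (IHv s').symm
    rw [htail]
    ring

end MainVar

/-- **Lemma (sum of total variances).**
For any policy `π`, any `h ∈ [H]` and any starting state `s` (i.e. conditionally on `s_h = s`),
the variance of the remaining return decomposes as a sum of per-step total variances:
`Var_π[Σ_{t=h}^H r_t] = Σ_{t=h}^H ( E_π[Var[r_t + V^π_{t+1}(s_{t+1}) | s_t, a_t]]
  + E_π[Var[E[r_t + V^π_{t+1}(s_{t+1}) | s_t, a_t] | s_t]] )`,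
where the trajectory `s_t, a_t, r_t, s_{t+1}` is generated by `π` (from `s_h = s`), the inner
conditional variance is `Var_{P_{s_t,a_t}}(r_t + V^π_{t+1}) = varTot`, and
`Var[E[r_t + V^π_{t+1}|s_t,a_t]|s_t]` is the variance of `Q^π_t(s_t, ·)` under `π_t(·|s_t)`. -/
theorem sum_of_total_variance :
    ∀ (S A : Type) [Fintype S] [Fintype A] [DecidableEq S] [DecidableEq A]
      [Nonempty S] [Nonempty A]
      (M : FinMDP S A) (π : Policy S A),
      ∀ h ∈ Finset.Icc 1 M.H, ∀ s : S,
        pmfVar (trajFrom M π h (M.H + 1 - h) s) retOf =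
          ∑ t ∈ Finset.Icc h M.H,
            ((∑ st, ∑ at', dStateFrom M π h s t st * π.p t st at' *
                varTot M t st at' (Vpi M π (t + 1)))
              + ∑ st, dStateFrom M π h s t st *
                  varDist (π.p t st) (fun a => Qpi M π t st a)) := by
  intro S A _ _ _ _ _ _ M π h hmem s
  rw [Finset.mem_Icc] at hmem
  exact (traj_exp_var M π (M.H + 1 - h) h s (by omega)).2
end

section
/- (Extended value difference) Let π = {π_h} and π' = {π'_h} be two arbitrary policies and {Q̂_h}_{h=1}^H arbitrary functions on S×A; define V̂_h(s) := ⟨Q̂_h(s,·), π_h(·|s)⟩ with V̂_{H+1} ≡ 0. Then for all s ∈ S: V̂_1(s) − V^{π'}_1(s) = Σ_{h=1}^H E_{π'}[⟨Q̂_h(s_h,·), π_h(·|s_h) − π'_h(·|s_h)⟩ | s_1 = s] + Σ_{h=1}^H E_{π'}[Q̂_h(s_h,a_h) − (T_h V̂_{h+1})(s_h,a_h) | s_1 = s], where (T_h V)(s,a) := r_h(s,a) + (P_h V)(s,a) and the expectations are over trajectories generated by π' in the MDP. -/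
open MeasureTheory Finset
open scoped BigOperators ENNReal Classical

/-- **Lemma (extended value difference).**
Let `π` and `π'` be arbitrary policies and `{Q̂_h}` arbitrary functions on `S × A`; define
`V̂_h(s) = ⟨Q̂_h(s,·), π_h(·|s)⟩` (with `V̂_{H+1} ≡ 0`). Then for all `s ∈ S`,
`V̂_1(s) − V^{π'}_1(s)
  = Σ_{h=1}^H E_{π'}[⟨Q̂_h(s_h,·), π_h(·|s_h) − π'_h(·|s_h)⟩ | s_1 = s]
    + Σ_{h=1}^H E_{π'}[Q̂_h(s_h,a_h) − (𝒯_h V̂_{h+1})(s_h,a_h) | s_1 = s]`,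
where `(𝒯_h V)(s,a) = r_h(s,a) + (P_h V)(s,a)` and the expectations over `(s_h, a_h)` are
expressed through the marginal occupancies of `π'` started from `s` at time `1`. -/
theorem extended_value_difference :
    ∀ (S A : Type) [Fintype S] [Fintype A] [DecidableEq S] [DecidableEq A]
      [Nonempty S] [Nonempty A]
      (M : FinMDP S A) (π π' : Policy S A) (Qh : ℕ → S → A → ℝ) (s : S),
      (if M.H + 1 ≤ 1 then 0 else ∑ a, π.p 1 s a * Qh 1 s a) - Vpi M π' 1 s =
        (∑ h ∈ Finset.Icc 1 M.H, ∑ sh, dStateFrom M π' 1 s h sh *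
            ∑ a, Qh h sh a * (π.p h sh a - π'.p h sh a))
          + ∑ h ∈ Finset.Icc 1 M.H, ∑ sh, ∑ a, dStateFrom M π' 1 s h sh * π'.p h sh a *
              (Qh h sh a - (meanR M h sh a + ∑ s', M.P h sh a s' *
                (if M.H + 1 ≤ h + 1 then 0 else ∑ a', π.p (h + 1) s' a' * Qh (h + 1) s' a'))) := by
  intro S A _ _ _ _ _ _ M π π' Qh s
  have key : ∀ n : ℕ, ∀ h : ℕ, 1 ≤ h → M.H + 1 ≤ h + n →
      (∑ sh, dStateFrom M π' 1 s h sh *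
          ((if M.H + 1 ≤ h then 0 else ∑ a, π.p h sh a * Qh h sh a) - Vpi M π' h sh)) =
        (∑ t ∈ Finset.Icc h M.H, ∑ sh, dStateFrom M π' 1 s t sh *
            ∑ a, Qh t sh a * (π.p t sh a - π'.p t sh a))
          + ∑ t ∈ Finset.Icc h M.H, ∑ sh, ∑ a, dStateFrom M π' 1 s t sh * π'.p t sh a *
              (Qh t sh a - (meanR M t sh a + ∑ s', M.P t sh a s' *
                (if M.H + 1 ≤ t + 1 then 0 else ∑ a', π.p (t + 1) s' a' * Qh (t + 1) s' a'))) := by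
    intro n
    induction n with
    | zero =>
      intro h h1 hn
      have hH : M.H + 1 ≤ h := by omega
      have hIcc : Finset.Icc h M.H = ∅ := by rw [Finset.Icc_eq_empty_iff]; omega
      have hV : Vpi M π' h = fun _ => 0 := by rw [Vpi, dif_pos hH]
      rw [hIcc]
      simp [hH, hV]
    | succ n ih =>
      intro h h1 hn
      by_cases hH : M.H + 1 ≤ h
      · have hIcc : Finset.Icc h M.H = ∅ := by rw [Finset.Icc_eq_empty_iff]; omega
        have hV : Vpi M π' h = fun _ => 0 := by rw [Vpi, dif_pos hH]
        rw [hIcc]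
        simp [hH, hV]
      · have hhH : h ≤ M.H := by omega
        have IH := ih (h + 1) (by omega) (by omega)
        rw [Finset.Icc_eq_cons_Ioc hhH, Finset.sum_cons, Finset.sum_cons, ← Finset.Icc_add_one_left_eq_Ioc]
        have hd1 : dStateFrom M π' 1 s (h + 1) =
            fun s' => ∑ sh, ∑ a, dStateFrom M π' 1 s h sh * π'.p h sh a * M.P h sh a s' := by
          rw [dStateFrom, dif_neg (by omega : ¬ h + 1 ≤ 1)]
          simp only [Nat.add_sub_cancel]
        have third : (∑ s', dStateFrom M π' 1 s (h + 1) s' *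
              ((if M.H + 1 ≤ h + 1 then 0 else ∑ a, π.p (h + 1) s' a * Qh (h + 1) s' a)
                - Vpi M π' (h + 1) s'))
            = ∑ sh, ∑ a, ∑ s', dStateFrom M π' 1 s h sh * π'.p h sh a * M.P h sh a s' *
              ((if M.H + 1 ≤ h + 1 then 0 else ∑ a', π.p (h + 1) s' a' * Qh (h + 1) s' a')
                - Vpi M π' (h + 1) s') := by
          rw [hd1]
          simp only [Finset.sum_mul]
          rw [Finset.sum_comm]
          refine Finset.sum_congr rfl fun sh _ => ?_
          rw [Finset.sum_comm]
        have main : (∑ sh, dStateFrom M π' 1 s h sh *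
              ((if M.H + 1 ≤ h then 0 else ∑ a, π.p h sh a * Qh h sh a) - Vpi M π' h sh))
            = (∑ sh, dStateFrom M π' 1 s h sh * ∑ a, Qh h sh a * (π.p h sh a - π'.p h sh a))
              + (∑ sh, ∑ a, dStateFrom M π' 1 s h sh * π'.p h sh a *
                  (Qh h sh a - (meanR M h sh a + ∑ s', M.P h sh a s' *
                    (if M.H + 1 ≤ h + 1 then 0 else
                      ∑ a', π.p (h + 1) s' a' * Qh (h + 1) s' a'))))
              + ∑ s', dStateFrom M π' 1 s (h + 1) s' *
                  ((if M.H + 1 ≤ h + 1 then 0 else ∑ a, π.p (h + 1) s' a * Qh (h + 1) s' a)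
                    - Vpi M π' (h + 1) s') := by
          rw [third, ← Finset.sum_add_distrib, ← Finset.sum_add_distrib]
          refine Finset.sum_congr rfl fun sh _ => ?_
          rw [if_neg hH, Vpi, dif_neg hH]
          have inner : ∀ a : A, (∑ s', dStateFrom M π' 1 s h sh * π'.p h sh a * M.P h sh a s' *
                ((if M.H + 1 ≤ h + 1 then 0 else ∑ a', π.p (h + 1) s' a' * Qh (h + 1) s' a')
                  - Vpi M π' (h + 1) s'))
              = dStateFrom M π' 1 s h sh * π'.p h sh a *
                ((∑ s', M.P h sh a s' *
                    (if M.H + 1 ≤ h + 1 then 0 else ∑ a', π.p (h + 1) s' a' * Qh (h + 1) s' a'))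
                  - ∑ s', M.P h sh a s' * Vpi M π' (h + 1) s') := by
            intro a
            rw [mul_sub, Finset.mul_sum, Finset.mul_sum, ← Finset.sum_sub_distrib]
            exact Finset.sum_congr rfl fun s' _ => by ring
          simp only [inner]
          rw [mul_sub, Finset.mul_sum, Finset.mul_sum, Finset.mul_sum,
            ← Finset.sum_sub_distrib, ← Finset.sum_add_distrib, ← Finset.sum_add_distrib]
          exact Finset.sum_congr rfl fun a _ => by ring
        rw [main, IH]
        ring
  have hkey := key M.H 1 le_rfl (by omega)
  have hd0 : dStateFrom M π' 1 s 1 = fun t => if t = s then 1 else 0 := by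
    rw [dStateFrom]
    exact dif_pos le_rfl
  rw [hd0] at hkey
  simp only [ite_mul, one_mul, zero_mul, Finset.sum_ite_eq', Finset.mem_univ, if_true] at hkey
  exact hkey
end
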